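/- Let δ > 0 and let (j_k) ⊂ ℕ satisfy j_{k+1} ≥ (1+δ) j_k with j_1 ≥ 1. For t > 0, split the indices: ∑_{k : t j_k ≤ 1} t j_k ≤ 1 + 1/δ and ∑_{k : t j_k > 1} e^{-t δ j_k} ≤ 1/(1 − e^{-δ²}). Hence ∑_{k : t j_k ≤ 1} t j_k + ∑_{k : t j_k > 1} e^{-t δ j_k} ≤ 1 + δ^{-1} + 1/(1 − e^{-δ²}) uniformly in t. -/

import Mathlib

/-- for a lacunary sequence (j_k) with j_1 ≥ 1 and ratio 1+δ,
both the small-frequency sum ∑_{tj_k ≤ 1} t j_k ≤ 1 + 1/δ and the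
large-frequency sum ∑_{tj_k > 1} e^{-tδ j_k} ≤ 1/(1−e^{-δ²}) hold, hence
their total is at most 1 + δ⁻¹ + 1/(1−e^{-δ²}) uniformly in t > 0. -/
theorem lacunary_split_bound (δ : ℝ) (hδ : 0 < δ) (j : ℕ → ℝ)
    (hj1 : 1 ≤ j 0) (hlac : ∀ k, (1 + δ) * j k ≤ j (k + 1))
    (t : ℝ) (ht : 0 < t) :
    (∑' k : ℕ, if t * j k ≤ 1 then t * j k else 0) ≤ 1 + 1 / δ ∧
    (∑' k : ℕ, if 1 < t * j k then Real.exp (-(t * δ * j k)) else 0) ≤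
      1 / (1 - Real.exp (-δ ^ 2)) ∧
    (∑' k : ℕ, if t * j k ≤ 1 then t * j k else 0) +
      (∑' k : ℕ, if 1 < t * j k then Real.exp (-(t * δ * j k)) else 0) ≤
      1 + δ⁻¹ + 1 / (1 - Real.exp (-δ ^ 2)) := by
  have hδ1 : (1:ℝ) < 1 + δ := by linarith
  have hδ0 : (0:ℝ) < 1 + δ := by linarith
  have hjpos : ∀ k, 0 < j k := by
    intro k; induction k with
    | zero => linarith
    | succ n ih => have := hlac n; nlinarith
  have hratio : ∀ k m, (1 + δ) ^ m * j k ≤ j (k + m) := by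
    intro k m; induction m with
    | zero => simp
    | succ n ih =>
        have h1 := hlac (k + n)
        calc (1+δ)^(n+1) * j k = (1+δ) * ((1+δ)^n * j k) := by ring
        _ ≤ (1+δ) * j (k+n) := by nlinarith
        _ ≤ j (k + (n+1)) := by rw [← add_assoc]; exact h1
  have hmono : ∀ {k n : ℕ}, k ≤ n → j k ≤ j n := by
    intro k n hkn
    obtain ⟨m, rfl⟩ := Nat.exists_eq_add_of_le hkn
    have hb : 1 + (m:ℝ) * δ ≤ (1+δ)^m := one_add_mul_le_pow (show (-2:ℝ) ≤ δ by linarith) m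
    have h1 : (1:ℝ) ≤ (1+δ)^m := by nlinarith [hb, (Nat.cast_nonneg m : (0:ℝ) ≤ (m:ℝ))]
    have := hratio k m
    nlinarith [hjpos k]
  -- existence of an index with 1 < t * j k
  have hex : ∃ k, 1 < t * j k := by
    obtain ⟨n, hn⟩ := exists_nat_gt (1 / (t * δ))
    refine ⟨n, ?_⟩
    have hb : 1 + (n:ℝ) * δ ≤ (1+δ)^n := one_add_mul_le_pow (show (-2:ℝ) ≤ δ by linarith) n
    have h1 : (1+δ)^n * j 0 ≤ j n := by simpa using hratio 0 n
    have hn' : 1 < (n:ℝ) * (t * δ) := by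
      rw [div_lt_iff₀ (by positivity)] at hn
      linarith [hn]
    have e2 : 1 + (n:ℝ)*δ ≤ (1+δ)^n * j 0 := by nlinarith [pow_pos hδ0 n]
    have e4 : t * (1 + (n:ℝ)*δ) ≤ t * j n :=
      mul_le_mul_of_nonneg_left (le_trans e2 h1) ht.le
    nlinarith [e4, hn', ht]
  set K := Nat.find hex with hKdef
  have hK : 1 < t * j K := Nat.find_spec hex
  have hKmin : ∀ m, m < K → ¬ (1 < t * j m) := fun m hm => Nat.find_min hex hm
  set r : ℝ := (1+δ)⁻¹ with hrdef
  have hr0 : 0 < r := by positivity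
  have hr1 : r < 1 := by
    rw [hrdef, inv_lt_one_iff₀]; right; exact hδ1
  set E : ℝ := Real.exp (-δ^2) with hEdef
  have hE0 : 0 < E := Real.exp_pos _
  have hE1 : E < 1 := by
    rw [hEdef, Real.exp_lt_one_iff]; nlinarith
  set f : ℕ → ℝ := fun k => if t * j k ≤ 1 then t * j k else 0 with hfdef
  set g : ℕ → ℝ := fun k => if 1 < t * j k then Real.exp (-(t * δ * j k)) else 0 with hgdef
  -- small sum
  have hfzero : ∀ k, k ∉ Finset.range K → f k = 0 := by
    intro k hk
    rw [Finset.mem_range, not_lt] at hk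
    have : 1 < t * j k := lt_of_lt_of_le hK (by nlinarith [hmono hk])
    simp only [hfdef, if_neg (not_le.mpr this)]
  have hsummf : Summable f := summable_of_ne_finset_zero hfzero
  have hfbound : ∀ k ∈ Finset.range K, f k ≤ r ^ (K - 1 - k) := by
    intro k hk
    rw [Finset.mem_range] at hk
    have hK1 : K - 1 < K := Nat.sub_lt (Nat.pos_of_ne_zero (by omega)) one_pos
    have hjK1 : t * j (K-1) ≤ 1 := not_lt.mp (hKmin (K-1) hK1)
    have hke : k + (K - 1 - k) = K - 1 := by omega
    have h1 : (1+δ)^(K-1-k) * j k ≤ j (K-1) := by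
      have := hratio k (K-1-k); rwa [hke] at this
    have hpm : (0:ℝ) < (1+δ)^(K-1-k) := by positivity
    have h2 : t * j k ≤ r ^ (K-1-k) := by
      rw [hrdef, inv_pow, ← one_div, le_div_iff₀ hpm]
      nlinarith
    simp only [hfdef]
    split_ifs
    · exact h2
    · positivity
  have hsmall : (∑' k, f k) ≤ 1 + 1/δ := by
    rw [tsum_eq_sum hfzero]
    calc ∑ k ∈ Finset.range K, f k
        ≤ ∑ k ∈ Finset.range K, r ^ (K - 1 - k) := Finset.sum_le_sum hfbound
      _ = ∑ k ∈ Finset.range K, r ^ k := Finset.sum_range_reflect (fun m => r ^ m) K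
      _ ≤ ∑' k : ℕ, r ^ k := Summable.sum_le_tsum _ (fun i _ => by positivity)
            (summable_geometric_of_lt_one hr0.le hr1)
      _ = (1 - r)⁻¹ := tsum_geometric_of_lt_one hr0.le hr1
      _ = 1 + 1/δ := by
          rw [hrdef]; rw [inv_eq_one_div, inv_eq_one_div]
          field_simp
          rw [add_sub_cancel_left, mul_div_cancel_left₀ _ hδ.ne']; ring
  -- large sum
  have hgnonneg : ∀ k, 0 ≤ g k := by
    intro k; simp only [hgdef]; split_ifs
    · exact (Real.exp_pos _).le
    · exact le_refl 0
  have hgle : ∀ m : ℕ, g (m + K) ≤ E ^ m := by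
    intro m
    have h1 : (1+δ)^m * j K ≤ j (K + m) := hratio K m
    have h2 : 1 + (m:ℝ)*δ ≤ (1+δ)^m := one_add_mul_le_pow (show (-2:ℝ) ≤ δ by linarith) m
    have hpm : (0:ℝ) < (1+δ)^m := by positivity
    have e0 : (1:ℝ) ≤ (1+δ)^m := by nlinarith [h2, (Nat.cast_nonneg m : (0:ℝ) ≤ (m:ℝ))]
    have e1 : t * ((1+δ)^m * j K) ≤ t * j (K+m) :=
      mul_le_mul_of_nonneg_left h1 ht.le
    have e2 : (1+δ)^m * 1 < (1+δ)^m * (t * j K) :=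
      mul_lt_mul_of_pos_left hK hpm
    have e3 : 1 + (m:ℝ)*δ ≤ t * j (K+m) := by nlinarith [e1, e2, h2]
    have h3 : 1 < t * j (m + K) := by rw [add_comm m K]; nlinarith [e1, e2, e0]
    have h4 : (m:ℝ) * δ^2 ≤ t * δ * j (m + K) := by
      rw [add_comm m K]
      nlinarith [mul_le_mul_of_nonneg_left e3 hδ.le]
    simp only [hgdef, if_pos h3]
    calc Real.exp (-(t * δ * j (m+K))) ≤ Real.exp (-((m:ℝ) * δ^2)) := by
          exact Real.exp_le_exp.mpr (by linarith)
      _ = E ^ m := by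
          rw [hEdef, ← Real.exp_nat_mul]; ring_nf
  have hgzero : ∀ k, k < K → g k = 0 := by
    intro k hk; simp only [hgdef, if_neg (hKmin k hk)]
  have hsummgeo : Summable (fun m : ℕ => E ^ m) := summable_geometric_of_lt_one hE0.le hE1
  have hsummg : Summable g := by
    have hsummE : Summable (fun k : ℕ => E ^ (k - K)) := by
      rw [← summable_nat_add_iff K]
      simpa using hsummgeo
    refine Summable.of_nonneg_of_le hgnonneg (fun k => ?_) hsummE
    rcases lt_or_ge k K with h | h
    · rw [hgzero k h]; positivity
    · have := hgle (k - K)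
      rwa [Nat.sub_add_cancel h] at this
  have hlarge : (∑' k, g k) ≤ 1 / (1 - E) := by
    have hsplit := Summable.sum_add_tsum_nat_add K hsummg
    have hz : ∑ i ∈ Finset.range K, g i = 0 :=
      Finset.sum_eq_zero (fun i hi => hgzero i (Finset.mem_range.mp hi))
    rw [← hsplit, hz, zero_add]
    calc (∑' i : ℕ, g (i + K)) ≤ ∑' i : ℕ, E ^ i :=
          Summable.tsum_le_tsum (fun i => hgle i) ((summable_nat_add_iff K).mpr hsummg) hsummgeo
      _ = (1 - E)⁻¹ := tsum_geometric_of_lt_one hE0.le hE1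
      _ = 1 / (1 - E) := (one_div _).symm
  refine ⟨hsmall, hlarge, ?_⟩
  have : (1:ℝ)/δ = δ⁻¹ := one_div δ
  linarith [hsmall, hlarge]
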